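/- Let H be a graph with at least one induced copy of C_5 and let (X_1,...,X_5) be a uniformly random induced embedding of C_5 into H. Then H(X_1 | X_2, X_3, X_4) ≤ H(X_1) − log_2 5. -/

import Mathlib

open Finset

/-- `negMulLog₂ t = -t * log₂ t` (with value `0` at `t = 0`). -/
noncomputable def negMulLog2 (t : ℝ) : ℝ := if t = 0 then 0 else -t * Real.logb 2 t

open Classical in
/-- The Shannon entropy (base 2) of the random variable `g x`, where `x` is uniform on
the finite set `T`. -/
noncomputable def uH {A S : Type*} (T : Finset A) (g : A → S) : ℝ :=
  ∑ s ∈ T.image g, negMulLog2 (((T.filter (fun t => g t = s)).card : ℝ) / (T.card : ℝ))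

open Classical in
/-- The set of induced embeddings of the `5`-cycle `C₅` into `H`: injective maps
`x : ZMod 5 → V` such that `x i` and `x j` are adjacent iff `i` and `j` are consecutive. -/
noncomputable def C5set {V : Type*} [Fintype V] (H : SimpleGraph V) : Finset (ZMod 5 → V) :=
  Finset.univ.filter (fun x => Function.Injective x ∧
    ∀ i j : ZMod 5, H.Adj (x i) (x j) ↔ (j = i + 1 ∨ i = j + 1))

namespace Stmt13Aux

set_option linter.unusedSectionVars false

/-! ### Generic sum lemmas -/

lemma sumA {α β : Type*} [Fintype β] [DecidableEq β] (s : Finset α) (g : α → β) (f : β → ℝ) :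
    ∑ a ∈ s, f (g a) = ∑ b : β, ((s.filter (fun a => g a = b)).card : ℝ) * f b := by
  classical
  rw [← Finset.sum_fiberwise' s g f]
  exact Finset.sum_congr rfl fun b _ => by rw [Finset.sum_const, nsmul_eq_mul]

open Classical in
lemma uH_eq {A S : Type*} (T : Finset A) (hT : T.Nonempty) (g : A → S) :
    uH T g = (T.card : ℝ)⁻¹ *
      ∑ x ∈ T, Real.logb 2 ((T.card : ℝ) / ((T.filter fun a => g a = g x).card : ℝ)) := by
  classical
  have hN : 0 < (T.card : ℝ) := by exact_mod_cast Finset.card_pos.mpr hT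
  rw [Finset.sum_comp (fun s => Real.logb 2 ((T.card : ℝ) / ((T.filter fun a => g a = s).card : ℝ)))
    g]
  rw [uH, Finset.mul_sum]
  refine Finset.sum_congr rfl fun s hs => ?_
  obtain ⟨x, hx, hgx⟩ := Finset.mem_image.mp hs
  have hc : 0 < ((T.filter fun a => g a = s).card : ℝ) := by
    exact_mod_cast Finset.card_pos.mpr ⟨x, Finset.mem_filter.mpr ⟨hx, hgx⟩⟩
  have hne : ((T.filter fun a => g a = s).card : ℝ) / (T.card : ℝ) ≠ 0 := by positivity
  rw [negMulLog2, if_neg hne, nsmul_eq_mul]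
  have : Real.logb 2 (((T.filter fun a => g a = s).card : ℝ) / (T.card : ℝ))
      = - Real.logb 2 ((T.card : ℝ) / ((T.filter fun a => g a = s).card : ℝ)) := by
    rw [← Real.logb_inv, inv_div]
  rw [this]
  field_simp

/-! ### Counting functions -/

variable {V : Type*} [Fintype V]

def tri (i : ZMod 5) (x : ZMod 5 → V) : V × V × V := (x (i+1), x (i+2), x (i+3))

open Classical in
noncomputable def MM (T : Finset (ZMod 5 → V)) (i : ZMod 5) (t : V × V × V) : ℕ :=
  (T.filter fun x => tri i x = t).card

open Classical in
noncomputable def QQ (T : Finset (ZMod 5 → V)) (i : ZMod 5) (y : V) (t : V × V × V) : ℕ :=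
  (T.filter fun x => x i = y ∧ tri i x = t).card

open Classical in
noncomputable def nn (T : Finset (ZMod 5 → V)) (i : ZMod 5) (y : V) : ℕ :=
  (T.filter fun x => x i = y).card

variable {T : Finset (ZMod 5 → V)} {i : ZMod 5} {y : V} {t : V × V × V}

lemma QQ_le_MM : QQ T i y t ≤ MM T i t := by
  classical
  apply Finset.card_le_card
  intro a ha
  simp only [Finset.mem_filter] at ha ⊢
  exact ⟨ha.1, ha.2.2⟩

lemma QQ_le_nn : QQ T i y t ≤ nn T i y := by
  classical
  apply Finset.card_le_card
  intro a ha
  simp only [Finset.mem_filter] at ha ⊢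
  exact ⟨ha.1, ha.2.1⟩

lemma MM_pos {x : ZMod 5 → V} (hx : x ∈ T) : 0 < MM T i (tri i x) :=
  Finset.card_pos.mpr ⟨x, by simp [MM, Finset.mem_filter, hx]⟩

lemma QQ_pos {x : ZMod 5 → V} (hx : x ∈ T) : 0 < QQ T i (x i) (tri i x) :=
  Finset.card_pos.mpr ⟨x, by simp [QQ, Finset.mem_filter, hx]⟩

lemma sum_QQ_eq_MM : ∑ y : V, QQ T i y t = MM T i t := by
  classical
  rw [MM, Finset.card_eq_sum_card_fiberwise (f := fun x => x i) (t := Finset.univ)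
    (fun x _ => Finset.mem_univ _)]
  refine Finset.sum_congr rfl fun y _ => ?_
  rw [QQ, Finset.filter_filter]
  congr 1
  apply Finset.filter_congr
  intro a _
  simp [and_comm]

lemma sum_QQ_eq_nn : ∑ t : V × V × V, QQ T i y t = nn T i y := by
  classical
  rw [nn, Finset.card_eq_sum_card_fiberwise (f := fun x => tri i x) (t := Finset.univ)
    (fun x _ => Finset.mem_univ _)]
  refine Finset.sum_congr rfl fun t _ => ?_
  rw [QQ, Finset.filter_filter]

lemma sum_nn_eq_card : ∑ y : V, nn T i y = T.card := by
  classical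
  rw [Finset.card_eq_sum_card_fiberwise (s := T) (f := fun x => x i) (t := Finset.univ)
    (fun x _ => Finset.mem_univ _)]
  exact Finset.sum_congr rfl fun y _ => by rw [nn]

open Classical in
lemma card_filter_pair :
    ((T.filter fun x : ZMod 5 → V => (x i, tri i x) = (y, t)).card) = QQ T i y t := by
  classical
  rw [QQ]
  congr 1
  apply Finset.filter_congr
  intro a _
  simp [Prod.ext_iff]

lemma sumA_nn (T : Finset (ZMod 5 → V)) (f : V → ℝ) :
    ∑ x ∈ T, f (x 0) = ∑ y : V, (nn T 0 y : ℝ) * f y := by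
  classical
  rw [sumA T (fun x => x 0) f]
  refine Finset.sum_congr rfl fun y _ => ?_
  congr 1

/-- E1 : reindexing entropy-type sums over `T` as sums over values. -/
lemma E1 (f : ℕ → ℕ → ℝ) :
    ∑ x ∈ T, f (MM T i (tri i x)) (QQ T i (x i) (tri i x))
      = ∑ y : V, ∑ t : V × V × V, (QQ T i y t : ℝ) * f (MM T i t) (QQ T i y t) := by
  classical
  have := sumA (β := V × (V × V × V)) T (fun x => (x i, tri i x))
    (fun p => f (MM T i p.2) (QQ T i p.1 p.2))
  rw [this, Fintype.sum_prod_type]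
  exact Finset.sum_congr rfl fun y _ => Finset.sum_congr rfl fun t _ => by
    rw [card_filter_pair]

/-- E2 : grouping a sum over `T` by the triple. -/
lemma E2 (F : V × V × V → ℝ) :
    ∑ x ∈ T, F (tri i x) = ∑ t : V × V × V, (MM T i t : ℝ) * F t := by
  classical
  rw [sumA T (fun x => tri i x) F]
  exact Finset.sum_congr rfl fun t _ => by rw [MM]

/-- Marginal of the resampled coordinate. -/
lemma marginal (i : ZMod 5) (y : V) :
    ∑ x ∈ T, (QQ T i y (tri i x) : ℝ) / (MM T i (tri i x)) = (nn T i y : ℝ) := by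
  classical
  rw [E2 (F := fun t => (QQ T i y t : ℝ) / (MM T i t)), ← sum_QQ_eq_nn (T := T) (i := i) (y := y)]
  push_cast
  refine Finset.sum_congr rfl fun t _ => ?_
  by_cases h : MM T i t = 0
  · have hq : QQ T i y t = 0 := by
      have := QQ_le_MM (T := T) (i := i) (y := y) (t := t)
      omega
    simp [h, hq]
  · have h' : (MM T i t : ℝ) ≠ 0 := Nat.cast_ne_zero.mpr h
    field_simp

/-- Normalization: for `x ∈ T`, the resampling weights sum to 1. -/
lemma normal (i : ZMod 5) {x : ZMod 5 → V} (hx : x ∈ T) :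
    ∑ y : V, (QQ T i y (tri i x) : ℝ) / (MM T i (tri i x)) = 1 := by
  rw [← Finset.sum_div]
  rw [show ∑ y : V, (QQ T i y (tri i x) : ℝ) = (MM T i (tri i x) : ℝ) by
    exact_mod_cast congrArg (Nat.cast (R := ℝ)) (sum_QQ_eq_MM (T := T) (i := i) (t := tri i x))]
  exact div_self (by exact_mod_cast (MM_pos hx).ne')

/-! ### Cyclic symmetry -/

def shf (i : ZMod 5) (x : ZMod 5 → V) : ZMod 5 → V := fun k => x (k + i)

lemma shf_shf (i : ZMod 5) (x : ZMod 5 → V) : shf (-i) (shf i x) = x := by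
  funext k; simp [shf, add_assoc]

lemma shf_shf' (i : ZMod 5) (x : ZMod 5 → V) : shf i (shf (-i) x) = x := by
  funext k; simp [shf, add_assoc]

lemma tri_shf (i : ZMod 5) (x : ZMod 5 → V) : tri 0 (shf i x) = tri i x := by
  simp [tri, shf, zero_add, add_comm]

lemma mem_C5set {H : SimpleGraph V} {x : ZMod 5 → V} :
    x ∈ C5set H ↔ Function.Injective x ∧
      ∀ i j : ZMod 5, H.Adj (x i) (x j) ↔ (j = i + 1 ∨ i = j + 1) := by
  simp [C5set]

lemma shf_mem {H : SimpleGraph V} {x : ZMod 5 → V} (hx : x ∈ C5set H) (i : ZMod 5) :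
    shf i x ∈ C5set H := by
  rw [mem_C5set] at hx ⊢
  obtain ⟨hinj, hadj⟩ := hx
  constructor
  · intro a b hab
    have := hinj hab
    exact add_right_cancel this
  · intro a b
    rw [shf, shf, hadj (a + i) (b + i)]
    constructor
    · rintro (h | h)
      · left
        have : b + i = (a + 1) + i := by rw [add_right_comm]; exact h
        exact add_right_cancel this
      · right
        have : a + i = (b + 1) + i := by rw [add_right_comm]; exact h
        exact add_right_cancel this
    · rintro (h | h)
      · left; rw [h]; ring
      · right; rw [h]; ring

variable {H : SimpleGraph V}

lemma MM_eq (i : ZMod 5) (t : V × V × V) : MM (C5set H) i t = MM (C5set H) 0 t := by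
  classical
  refine Finset.card_nbij' (shf i) (shf (-i)) ?_ ?_ ?_ ?_
  · intro a ha
    simp only [Finset.mem_coe, Finset.mem_filter] at ha ⊢
    exact ⟨shf_mem ha.1 i, by rw [tri_shf]; exact ha.2⟩
  · intro a ha
    simp only [Finset.mem_coe, Finset.mem_filter] at ha ⊢
    refine ⟨shf_mem ha.1 (-i), ?_⟩
    rw [← tri_shf i (shf (-i) a), shf_shf']
    exact ha.2
  · intro a _; exact shf_shf i a
  · intro a _; exact shf_shf' i a

lemma QQ_eq (i : ZMod 5) (y : V) (t : V × V × V) :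
    QQ (C5set H) i y t = QQ (C5set H) 0 y t := by
  classical
  refine Finset.card_nbij' (shf i) (shf (-i)) ?_ ?_ ?_ ?_
  · intro a ha
    simp only [Finset.mem_coe, Finset.mem_filter] at ha ⊢
    refine ⟨shf_mem ha.1 i, ?_, by rw [tri_shf]; exact ha.2.2⟩
    show a (0 + i) = y
    rw [zero_add]; exact ha.2.1
  · intro a ha
    simp only [Finset.mem_coe, Finset.mem_filter] at ha ⊢
    refine ⟨shf_mem ha.1 (-i), ?_, ?_⟩
    · show a (i + -i) = y
      rw [add_neg_cancel]; exact ha.2.1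
    · rw [← tri_shf i (shf (-i) a), shf_shf']
      exact ha.2.2
  · intro a _; exact shf_shf i a
  · intro a _; exact shf_shf' i a

lemma nn_eq (i : ZMod 5) (y : V) : nn (C5set H) i y = nn (C5set H) 0 y := by
  classical
  refine Finset.card_nbij' (shf i) (shf (-i)) ?_ ?_ ?_ ?_
  · intro a ha
    simp only [Finset.mem_coe, Finset.mem_filter] at ha ⊢
    refine ⟨shf_mem ha.1 i, ?_⟩
    show a (0 + i) = y
    rw [zero_add]; exact ha.2
  · intro a ha
    simp only [Finset.mem_coe, Finset.mem_filter] at ha ⊢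
    refine ⟨shf_mem ha.1 (-i), ?_⟩
    show a (i + -i) = y
    rw [add_neg_cancel]; exact ha.2
  · intro a _; exact shf_shf i a
  · intro a _; exact shf_shf' i a

/-! ### Disjointness of supports -/

lemma resample_facts {x : ZMod 5 → V} {y : V} {i : ZMod 5}
    (h : 0 < QQ (C5set H) i y (tri i x)) :
    H.Adj y (x (i+1)) ∧ ¬ H.Adj y (x (i+2)) ∧ ¬ H.Adj y (x (i+3)) := by
  classical
  obtain ⟨a, ha⟩ := Finset.card_pos.mp h
  simp only [QQ, Finset.mem_filter] at ha
  obtain ⟨haT, hay, hat⟩ := ha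
  rw [mem_C5set] at haT
  simp only [tri, Prod.mk.injEq] at hat
  refine ⟨?_, ?_, ?_⟩
  · have := (haT.2 i (i+1)).mpr (Or.inl rfl)
    rwa [hay, hat.1] at this
  · intro hadj
    have := (haT.2 i (i+2)).mp (by rwa [hay, hat.2.1])
    rcases this with hc | hc
    · exact absurd (add_left_cancel hc) (by decide)
    · rw [add_assoc] at hc
      exact absurd (left_eq_add.mp hc) (by decide)
  · intro hadj
    have := (haT.2 i (i+3)).mp (by rwa [hay, hat.2.2])
    rcases this with hc | hc
    · exact absurd (add_left_cancel hc) (by decide)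
    · rw [add_assoc] at hc
      exact absurd (left_eq_add.mp hc) (by decide)

lemma disjoint_supports {x : ZMod 5 → V} {y : V} {i j : ZMod 5}
    (hij : i ≠ j) (hi : 0 < QQ (C5set H) i y (tri i x)) :
    ¬ 0 < QQ (C5set H) j y (tri j x) := by
  intro hj
  obtain ⟨hi1, hi2, hi3⟩ := resample_facts hi
  obtain ⟨hj1, hj2, hj3⟩ := resample_facts hj
  have he : j = i + (j - i) := by ring
  have hd : j - i = 1 ∨ j - i = 2 ∨ j - i = 3 ∨ j - i = 4 := by
    have h0 : j - i ≠ 0 := fun hc => hij (by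
      have : j = i + 0 := by rw [← hc]; ring
      simpa using this.symm)
    revert h0; generalize j - i = e; revert e; decide
  rcases hd with hd | hd | hd | hd
  · rw [hd] at he
    exact hi2 (by rw [show i + 2 = j + 1 by rw [he]; ring]; exact hj1)
  · rw [hd] at he
    exact hi3 (by rw [show i + 3 = j + 1 by rw [he]; ring]; exact hj1)
  · rw [hd] at he
    exact hj3 (by rw [show j + 3 = i + 1 by rw [he, add_assoc]; exact congrArg _ (by decide)]; exact hi1)
  · rw [hd] at he
    exact hj2 (by rw [show j + 2 = i + 1 by rw [he, add_assoc]; exact congrArg _ (by decide)]; exact hi1)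

/-! ### The analytic (Gibbs) inequality -/

lemma point_ineq {q m n NN : ℕ} (hq : 0 < q) (hqm : q ≤ m) (hqn : q ≤ n) (hN : 0 < NN) :
    (q:ℝ)/m * ((Real.log n - Real.log NN + Real.log 5) + (Real.log m - Real.log q))
      ≤ 5*(n:ℝ)/NN - (q:ℝ)/m := by
  have hq' : 0 < (q:ℝ) := by exact_mod_cast hq
  have hm' : 0 < (m:ℝ) := by exact_mod_cast lt_of_lt_of_le hq hqm
  have hn' : 0 < (n:ℝ) := by exact_mod_cast lt_of_lt_of_le hq hqn
  have hN' : 0 < (NN:ℝ) := by exact_mod_cast hN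
  set u : ℝ := 5*(n:ℝ)*m/(q*NN) with hu_def
  have hu : 0 < u := by positivity
  have hlog : Real.log u ≤ u - 1 := Real.log_le_sub_one_of_pos hu
  have hbr : Real.log u
      = (Real.log n - Real.log NN + Real.log 5) + (Real.log m - Real.log q) := by
    rw [hu_def, Real.log_div (by positivity) (by positivity),
      Real.log_mul (by positivity) hm'.ne', Real.log_mul (by norm_num) hn'.ne',
      Real.log_mul hq'.ne' hN'.ne']
    ring
  rw [← hbr]
  have h2 : (q:ℝ)/m * u = 5*(n:ℝ)/NN := by
    rw [hu_def]; field_simp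
  calc (q:ℝ)/m * Real.log u ≤ (q:ℝ)/m * (u - 1) :=
        mul_le_mul_of_nonneg_left hlog (by positivity)
    _ = 5*(n:ℝ)/NN - (q:ℝ)/m := by rw [mul_sub, h2, mul_one]

lemma point_ineq' (q m n NN : ℕ) (hqm : q ≤ m) (hqn : q ≤ n) (hN : 0 < NN) :
    (q:ℝ)/m * ((Real.log n - Real.log NN + Real.log 5) + (Real.log m - Real.log q))
      ≤ (if 0 < q then 5*(n:ℝ)/NN else 0) - (q:ℝ)/m := by
  by_cases hq : 0 < q
  · rw [if_pos hq]; exact point_ineq hq hqm hqn hN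
  · have hq0 : q = 0 := by omega
    subst hq0
    simp

lemma sum_ite_le_of_subsingleton {c : ℝ} (hc : 0 ≤ c) (P : ZMod 5 → Prop) [DecidablePred P]
    (h : ∀ i j, P i → P j → i = j) : ∑ i : ZMod 5, (if P i then c else 0) ≤ c := by
  classical
  rw [Finset.sum_ite, Finset.sum_const, Finset.sum_const_zero, add_zero, nsmul_eq_mul]
  have hcard : (Finset.univ.filter P).card ≤ 1 :=
    Finset.card_le_one.mpr (fun a ha b hb =>
      h a b (Finset.mem_filter.mp ha).2 (Finset.mem_filter.mp hb).2)
  have : ((Finset.univ.filter P).card : ℝ) ≤ 1 := by exact_mod_cast hcard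
  nlinarith

/-! ### Putting the Gibbs inequality together -/

/-- The total Gibbs sum is nonpositive. -/
lemma gibbs (hne : (C5set H).Nonempty) :
    ∑ i : ZMod 5, ∑ x ∈ C5set H, ∑ y : V,
      (QQ (C5set H) i y (tri i x) : ℝ) / (MM (C5set H) i (tri i x)) *
        ((Real.log (nn (C5set H) 0 y) - Real.log ((C5set H).card) + Real.log 5)
          + (Real.log (MM (C5set H) i (tri i x)) - Real.log (QQ (C5set H) i y (tri i x))))
      ≤ 0 := by
  classical
  set T := C5set H with hT
  have hN : 0 < T.card := Finset.card_pos.mpr hne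
  have step1 : ∑ i : ZMod 5, ∑ x ∈ T, ∑ y : V,
      (QQ T i y (tri i x) : ℝ) / (MM T i (tri i x)) *
        ((Real.log (nn T 0 y) - Real.log (T.card) + Real.log 5)
          + (Real.log (MM T i (tri i x)) - Real.log (QQ T i y (tri i x))))
      ≤ ∑ i : ZMod 5, ∑ x ∈ T, ∑ y : V,
        ((if 0 < QQ T i y (tri i x) then 5*(nn T 0 y : ℝ)/(T.card) else 0)
          - (QQ T i y (tri i x) : ℝ) / (MM T i (tri i x))) := by
    refine Finset.sum_le_sum fun i _ => Finset.sum_le_sum fun x hx => Finset.sum_le_sum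
      fun y _ => ?_
    refine point_ineq' _ _ _ _ QQ_le_MM ?_ hN
    calc QQ T i y (tri i x) ≤ nn T i y := QQ_le_nn
      _ = nn T 0 y := nn_eq i y
  have step2 : ∑ i : ZMod 5, ∑ x ∈ T, ∑ y : V,
        ((if 0 < QQ T i y (tri i x) then 5*(nn T 0 y : ℝ)/(T.card) else 0)
          - (QQ T i y (tri i x) : ℝ) / (MM T i (tri i x)))
      = (∑ i : ZMod 5, ∑ x ∈ T, ∑ y : V,
          (if 0 < QQ T i y (tri i x) then 5*(nn T 0 y : ℝ)/(T.card) else 0))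
        - ∑ i : ZMod 5, ∑ x ∈ T, ∑ y : V,
          (QQ T i y (tri i x) : ℝ) / (MM T i (tri i x)) := by
    rw [← Finset.sum_sub_distrib]
    refine Finset.sum_congr rfl fun i _ => ?_
    rw [← Finset.sum_sub_distrib]
    refine Finset.sum_congr rfl fun x _ => ?_
    rw [← Finset.sum_sub_distrib]
  have hA : ∑ i : ZMod 5, ∑ x ∈ T, ∑ y : V,
      (if 0 < QQ T i y (tri i x) then 5*(nn T 0 y : ℝ)/(T.card) else 0)
      ≤ 5 * T.card := by
    rw [Finset.sum_comm]
    have swap2 : ∑ x ∈ T, ∑ i : ZMod 5, ∑ y : V,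
        (if 0 < QQ T i y (tri i x) then 5*(nn T 0 y : ℝ)/(T.card) else 0)
        = ∑ x ∈ T, ∑ y : V, ∑ i : ZMod 5,
          (if 0 < QQ T i y (tri i x) then 5*(nn T 0 y : ℝ)/(T.card) else 0) :=
      Finset.sum_congr rfl fun x _ => Finset.sum_comm
    rw [swap2]
    have bound : ∀ x ∈ T, ∑ y : V, ∑ i : ZMod 5,
        (if 0 < QQ T i y (tri i x) then 5*(nn T 0 y : ℝ)/(T.card) else 0)
        ≤ ∑ y : V, 5*(nn T 0 y : ℝ)/(T.card) := by
      intro x hx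
      refine Finset.sum_le_sum fun y _ => ?_
      refine sum_ite_le_of_subsingleton (by positivity) _ ?_
      intro i j hi hj
      by_contra hij
      exact disjoint_supports hij hi hj
    have inner : ∑ y : V, 5*(nn T 0 y : ℝ)/(T.card) = 5 := by
      rw [← Finset.sum_div]
      rw [show ∑ y : V, 5*(nn T 0 y : ℝ) = 5 * T.card by
        rw [← Finset.mul_sum]
        congr 1
        exact_mod_cast congrArg (Nat.cast (R := ℝ)) (sum_nn_eq_card (T := T) (i := 0))]
      field_simp
    calc ∑ x ∈ T, ∑ y : V, ∑ i : ZMod 5,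
        (if 0 < QQ T i y (tri i x) then 5*(nn T 0 y : ℝ)/(T.card) else 0)
        ≤ ∑ x ∈ T, ∑ y : V, 5*(nn T 0 y : ℝ)/(T.card) := Finset.sum_le_sum bound
      _ = ∑ x ∈ T, (5:ℝ) := Finset.sum_congr rfl fun x _ => inner
      _ = 5 * T.card := by rw [Finset.sum_const, nsmul_eq_mul]; ring
  have hB : ∑ i : ZMod 5, ∑ x ∈ T, ∑ y : V,
      (QQ T i y (tri i x) : ℝ) / (MM T i (tri i x)) = 5 * T.card := by
    have inner : ∀ i : ZMod 5, ∑ x ∈ T, ∑ y : V,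
        (QQ T i y (tri i x) : ℝ) / (MM T i (tri i x)) = (T.card : ℝ) := by
      intro i
      rw [Finset.sum_congr rfl (fun x hx => normal i hx), Finset.sum_const, nsmul_eq_mul,
        mul_one]
    rw [Finset.sum_congr rfl (fun i _ => inner i), Finset.sum_const, nsmul_eq_mul]
    rw [Finset.card_univ]
    norm_num
  calc ∑ i : ZMod 5, ∑ x ∈ T, ∑ y : V,
      (QQ T i y (tri i x) : ℝ) / (MM T i (tri i x)) *
        ((Real.log (nn T 0 y) - Real.log (T.card) + Real.log 5)
          + (Real.log (MM T i (tri i x)) - Real.log (QQ T i y (tri i x))))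
      ≤ ∑ i : ZMod 5, ∑ x ∈ T, ∑ y : V,
        ((if 0 < QQ T i y (tri i x) then 5*(nn T 0 y : ℝ)/(T.card) else 0)
          - (QQ T i y (tri i x) : ℝ) / (MM T i (tri i x))) := step1
    _ = (∑ i : ZMod 5, ∑ x ∈ T, ∑ y : V,
          (if 0 < QQ T i y (tri i x) then 5*(nn T 0 y : ℝ)/(T.card) else 0))
        - ∑ i : ZMod 5, ∑ x ∈ T, ∑ y : V,
          (QQ T i y (tri i x) : ℝ) / (MM T i (tri i x)) := step2
    _ ≤ 0 := by rw [hB]; linarith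

/-- The per-`i` expansion of the Gibbs sum. -/
lemma perI (hne : (C5set H).Nonempty) (i : ZMod 5) :
    ∑ x ∈ C5set H, ∑ y : V,
      (QQ (C5set H) i y (tri i x) : ℝ) / (MM (C5set H) i (tri i x)) *
        ((Real.log (nn (C5set H) 0 y) - Real.log ((C5set H).card) + Real.log 5)
          + (Real.log (MM (C5set H) i (tri i x)) - Real.log (QQ (C5set H) i y (tri i x))))
      = (∑ y : V, (nn (C5set H) 0 y : ℝ) *
          (Real.log (nn (C5set H) 0 y) - Real.log ((C5set H).card) + Real.log 5))
        + ∑ x ∈ C5set H,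
            (Real.log (MM (C5set H) 0 (tri 0 x)) - Real.log (QQ (C5set H) 0 (x 0) (tri 0 x))) := by
  classical
  set T := C5set H with hT
  have split : ∀ x ∈ T, ∑ y : V,
      (QQ T i y (tri i x) : ℝ) / (MM T i (tri i x)) *
        ((Real.log (nn T 0 y) - Real.log (T.card) + Real.log 5)
          + (Real.log (MM T i (tri i x)) - Real.log (QQ T i y (tri i x))))
      = (∑ y : V, (QQ T i y (tri i x) : ℝ) / (MM T i (tri i x)) *
          (Real.log (nn T 0 y) - Real.log (T.card) + Real.log 5))
        + ∑ y : V, (QQ T i y (tri i x) : ℝ) / (MM T i (tri i x)) *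
          (Real.log (MM T i (tri i x)) - Real.log (QQ T i y (tri i x))) := by
    intro x _
    rw [← Finset.sum_add_distrib]
    exact Finset.sum_congr rfl fun y _ => by ring
  rw [Finset.sum_congr rfl split, Finset.sum_add_distrib]
  congr 1
  · -- first part: marginal computation
    rw [Finset.sum_comm]
    refine Finset.sum_congr rfl fun y _ => ?_
    rw [← Finset.sum_mul, marginal i y, nn_eq i y]
  · -- second part: conditional entropy identity
    have e2 := E2 (T := T) (i := i) (F := fun t => ∑ y : V, (QQ T i y t : ℝ) / (MM T i t) *
      (Real.log (MM T i t) - Real.log (QQ T i y t)))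
    have step : ∀ t : V × V × V, (MM T i t : ℝ) * ∑ y : V, (QQ T i y t : ℝ) / (MM T i t) *
          (Real.log (MM T i t) - Real.log (QQ T i y t))
        = ∑ y : V, (QQ T i y t : ℝ) * (Real.log (MM T i t) - Real.log (QQ T i y t)) := by
      intro t
      rw [Finset.mul_sum]
      refine Finset.sum_congr rfl fun y _ => ?_
      by_cases h : MM T i t = 0
      · have hq : QQ T i y t = 0 := by
          have := QQ_le_MM (T := T) (i := i) (y := y) (t := t)
          omega
        simp [h, hq]
      · have h' : (MM T i t : ℝ) ≠ 0 := Nat.cast_ne_zero.mpr h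
        field_simp
    have e1 := E1 (T := T) (i := (0 : ZMod 5)) (f := fun a b => Real.log a - Real.log b)
    calc ∑ x ∈ T, ∑ y : V, (QQ T i y (tri i x) : ℝ) / (MM T i (tri i x)) *
          (Real.log (MM T i (tri i x)) - Real.log (QQ T i y (tri i x)))
        = ∑ t : V × V × V, (MM T i t : ℝ) * ∑ y : V, (QQ T i y t : ℝ) / (MM T i t) *
            (Real.log (MM T i t) - Real.log (QQ T i y t)) := e2
      _ = ∑ t : V × V × V, ∑ y : V,
            (QQ T i y t : ℝ) * (Real.log (MM T i t) - Real.log (QQ T i y t)) :=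
          Finset.sum_congr rfl fun t _ => step t
      _ = ∑ y : V, ∑ t : V × V × V,
            (QQ T i y t : ℝ) * (Real.log (MM T i t) - Real.log (QQ T i y t)) :=
          Finset.sum_comm
      _ = ∑ y : V, ∑ t : V × V × V,
            (QQ T 0 y t : ℝ) * (Real.log (MM T 0 t) - Real.log (QQ T 0 y t)) := by
          refine Finset.sum_congr rfl fun y _ => Finset.sum_congr rfl fun t _ => ?_
          rw [QQ_eq i y t, MM_eq i t]
      _ = ∑ x ∈ T, (Real.log (MM T 0 (tri 0 x)) - Real.log (QQ T 0 (x 0) (tri 0 x))) := e1.symm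

end Stmt13Aux


open Stmt13Aux in
/-- Let `(X₁,…,X₅)` be a uniformly random induced embedding of `C₅` into `H` (here
`Xᵢ = x (i-1)`). Then `H(X₁ ∣ X₂, X₃, X₄) ≤ H(X₁) - log₂ 5`, where the conditional
entropy is expressed as a difference of joint entropies. -/
theorem stmt13 {V : Type*} [Fintype V] (H : SimpleGraph V) (hne : (C5set H).Nonempty) :
    uH (C5set H) (fun x => (x 0, x 1, x 2, x 3)) - uH (C5set H) (fun x => (x 1, x 2, x 3))
      ≤ uH (C5set H) (fun x => x 0) - Real.logb 2 5 := by
  classical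
  set T := C5set H with hT
  have hN : 0 < T.card := Finset.card_pos.mpr hne
  have hN' : 0 < (T.card : ℝ) := by exact_mod_cast hN
  have hL2 : 0 < Real.log 2 := Real.log_pos (by norm_num)
  -- KEY inequality from `gibbs` and `perI`
  have key : ∑ x ∈ T, (Real.log (MM T 0 (tri 0 x)) - Real.log (QQ T 0 (x 0) (tri 0 x)))
      ≤ ∑ y : V, (nn T 0 y : ℝ) * (Real.log (T.card) - Real.log (nn T 0 y))
        - (T.card : ℝ) * Real.log 5 := by
    have hg := gibbs (H := H) hne
    rw [Finset.sum_congr rfl (fun i (_ : i ∈ Finset.univ) => perI (H := H) hne i)] at hg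
    rw [Finset.sum_const, Finset.card_univ, nsmul_eq_mul] at hg
    have h5 : ((Fintype.card (ZMod 5) : ℕ) : ℝ) = 5 := by norm_num
    rw [h5] at hg
    have hS : ∑ y : V, (nn T 0 y : ℝ) *
        (Real.log (nn T 0 y) - Real.log (T.card) + Real.log 5)
        = (∑ y : V, (nn T 0 y : ℝ) * (Real.log (nn T 0 y) - Real.log (T.card)))
          + (T.card : ℝ) * Real.log 5 := by
      calc ∑ y : V, (nn T 0 y : ℝ) * (Real.log (nn T 0 y) - Real.log (T.card) + Real.log 5)
          = ∑ y : V, ((nn T 0 y : ℝ) * (Real.log (nn T 0 y) - Real.log (T.card))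
              + (nn T 0 y : ℝ) * Real.log 5) :=
            Finset.sum_congr rfl fun y _ => by ring
        _ = (∑ y : V, (nn T 0 y : ℝ) * (Real.log (nn T 0 y) - Real.log (T.card)))
              + ∑ y : V, (nn T 0 y : ℝ) * Real.log 5 := Finset.sum_add_distrib
        _ = (∑ y : V, (nn T 0 y : ℝ) * (Real.log (nn T 0 y) - Real.log (T.card)))
              + (T.card : ℝ) * Real.log 5 := by
            congr 1
            rw [← Finset.sum_mul]
            congr 1
            exact_mod_cast congrArg (Nat.cast (R := ℝ)) (sum_nn_eq_card (T := T) (i := 0))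
    rw [hS] at hg
    have hrev : ∑ y : V, (nn T 0 y : ℝ) * (Real.log (T.card) - Real.log (nn T 0 y))
        = - ∑ y : V, (nn T 0 y : ℝ) * (Real.log (nn T 0 y) - Real.log (T.card)) := by
      rw [← Finset.sum_neg_distrib]
      exact Finset.sum_congr rfl fun y _ => by ring
    rw [hrev]
    nlinarith [hg]
  -- express the three entropies
  have hlogb : ∀ c : ℕ, 0 < c → Real.logb 2 ((T.card : ℝ) / (c : ℝ))
      = (Real.log (T.card) - Real.log c) / Real.log 2 := by
    intro c hc
    rw [Real.logb, Real.log_div hN'.ne' (by exact_mod_cast hc.ne')]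
  have e4 : uH T (fun x => (x 0, x 1, x 2, x 3)) = (T.card : ℝ)⁻¹ *
      ∑ x ∈ T, (Real.log (T.card) - Real.log (QQ T 0 (x 0) (tri 0 x))) / Real.log 2 := by
    rw [uH_eq T hne]
    congr 1
    refine Finset.sum_congr rfl fun x hx => ?_
    have h := hlogb (QQ T 0 (x 0) (tri 0 x)) (QQ_pos hx)
    convert h using 4
    norm_cast
    rw [QQ]
    exact congrArg Finset.card (Finset.filter_congr fun a _ => by
      simp [tri, Prod.ext_iff, and_assoc])
  have e3 : uH T (fun x => (x 1, x 2, x 3)) = (T.card : ℝ)⁻¹ *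
      ∑ x ∈ T, (Real.log (T.card) - Real.log (MM T 0 (tri 0 x))) / Real.log 2 := by
    rw [uH_eq T hne]
    congr 1
    refine Finset.sum_congr rfl fun x hx => ?_
    have h := hlogb (MM T 0 (tri 0 x)) (MM_pos hx)
    convert h using 4
    norm_cast
  have e1 : uH T (fun x => x 0) = (T.card : ℝ)⁻¹ *
      ∑ x ∈ T, (Real.log (T.card) - Real.log (nn T 0 (x 0))) / Real.log 2 := by
    rw [uH_eq T hne]
    congr 1
    refine Finset.sum_congr rfl fun x hx => ?_
    have hpos : 0 < nn T 0 (x 0) := by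
      rw [nn]
      exact Finset.card_pos.mpr ⟨x, Finset.mem_filter.mpr ⟨hx, rfl⟩⟩
    have h := hlogb (nn T 0 (x 0)) hpos
    convert h using 4
    rw [nn]
  -- regroup the single-coordinate entropy sum by value
  have hgroup : ∑ x ∈ T, (Real.log (T.card) - Real.log (nn T 0 (x 0)))
      = ∑ y : V, (nn T 0 y : ℝ) * (Real.log (T.card) - Real.log (nn T 0 y)) :=
    sumA_nn T (fun y => Real.log (T.card) - Real.log (nn T 0 y))
  -- final arithmetic
  rw [e4, e3, e1, Real.logb]
  rw [← Finset.sum_div, ← Finset.sum_div, ← Finset.sum_div, hgroup]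
  have hD : ∑ x ∈ T, (Real.log (T.card) - Real.log (QQ T 0 (x 0) (tri 0 x)))
      - ∑ x ∈ T, (Real.log (T.card) - Real.log (MM T 0 (tri 0 x)))
      = ∑ x ∈ T, (Real.log (MM T 0 (tri 0 x)) - Real.log (QQ T 0 (x 0) (tri 0 x))) := by
    rw [← Finset.sum_sub_distrib]
    exact Finset.sum_congr rfl fun x _ => by ring
  have hNL2 : (0:ℝ) < (T.card : ℝ) * Real.log 2 := by positivity
  rw [show (T.card : ℝ)⁻¹ * ((∑ x ∈ T, (Real.log (T.card)
        - Real.log (QQ T 0 (x 0) (tri 0 x)))) / Real.log 2)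
      - (T.card : ℝ)⁻¹ * ((∑ x ∈ T, (Real.log (T.card) - Real.log (MM T 0 (tri 0 x))))
        / Real.log 2)
      = (∑ x ∈ T, (Real.log (MM T 0 (tri 0 x)) - Real.log (QQ T 0 (x 0) (tri 0 x))))
        / ((T.card : ℝ) * Real.log 2) by
    rw [← hD]; field_simp]
  rw [show (T.card : ℝ)⁻¹ * ((∑ y : V, (nn T 0 y : ℝ) * (Real.log (T.card)
        - Real.log (nn T 0 y))) / Real.log 2) - Real.log 5 / Real.log 2
      = ((∑ y : V, (nn T 0 y : ℝ) * (Real.log (T.card) - Real.log (nn T 0 y)))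
          - (T.card : ℝ) * Real.log 5) / ((T.card : ℝ) * Real.log 2) by
    field_simp]
  exact div_le_div_of_nonneg_right key hNL2.le
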